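/- Let d ≥ 0, u ≥ 0, c ≥ 1 and n ≥ d + c + u + 1. Let T be a family of subsets of P = {1,…,n} with the following property: for every two repositories on P with K = ∅, at most u unknown dependencies (|U| ≤ u), at most d defective packages, and at most c weakly-conflicting pairs of non-defective packages each, if every query in T receives identical feedback under both repositories then the two repositories have the same weak-conflict relation. Then T is an (n, d+c−1, u+2)-cover-free family. -/

import Mathlib

/-- A software repository on package set `Fin n`: known dependencies `K`,
unknown dependencies `U`, conflicts `C` (unordered pairs of distinct packages),
and broken packages `B`. -/
structure Repo (n : ℕ) where
  K : Finset (Fin n × Fin n)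
  U : Finset (Fin n × Fin n)
  C : Finset (Sym2 (Fin n))
  B : Finset (Fin n)
  hC : ∀ s ∈ C, ¬ s.IsDiag

/-- An installation `I` is successful if it avoids broken packages, is closed
under all (known and unknown) dependencies, and contains no conflicting pair. -/
def Successful {n : ℕ} (R : Repo n) (I : Finset (Fin n)) : Prop :=
  Disjoint I R.B ∧
  (∀ e ∈ R.K ∪ R.U, e.1 ∈ I → e.2 ∈ I) ∧
  (∀ s ∈ R.C, ¬ ∀ x ∈ s, x ∈ I)

/-- A package is defective if no successful installation contains it. -/
def Defective {n : ℕ} (R : Repo n) (p : Fin n) : Prop :=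
  ∀ I : Finset (Fin n), Successful R I → p ∉ I

/-- The set of defective packages. -/
def DefSet {n : ℕ} (R : Repo n) : Set (Fin n) := {p | Defective R p}

/-- Two packages weakly conflict if no successful installation contains both. -/
def WeakConflict {n : ℕ} (R : Repo n) (p q : Fin n) : Prop :=
  ∀ I : Finset (Fin n), Successful R I → ¬ (p ∈ I ∧ q ∈ I)

/-- `p` weakly depends on `q` if every successful installation containing `p`
also contains `q`. -/
def WeakDep {n : ℕ} (R : Repo n) (p q : Fin n) : Prop :=
  ∀ I : Finset (Fin n), Successful R I → p ∈ I → q ∈ I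

/-- The weakly-conflicting pairs of non-defective packages (each unordered pair
counted once via `<`). -/
def WeakConflictPairs {n : ℕ} (R : Repo n) : Set (Fin n × Fin n) :=
  {pq | pq.1 < pq.2 ∧ ¬ Defective R pq.1 ∧ ¬ Defective R pq.2 ∧
    WeakConflict R pq.1 pq.2}

/-- `(n,a,b)`-cover-free family. -/
def IsCFF (n a b : ℕ) (T : Finset (Finset (Fin n))) : Prop :=
  ∀ S₁ S₂ : Finset (Fin n), Disjoint S₁ S₂ → S₁.card = a → S₂.card = b →
    ∃ v ∈ T, Disjoint v S₁ ∧ S₂ ⊆ v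

/-- The `(≤a, ≤b)`-covering property. -/
def CoveringLE (n a b : ℕ) (F : Finset (Finset (Fin n))) : Prop :=
  ∀ S₁ S₂ : Finset (Fin n), Disjoint S₁ S₂ → S₁.card ≤ a →
    1 ≤ S₂.card → S₂.card ≤ b → ∃ v ∈ F, Disjoint v S₁ ∧ S₂ ⊆ v

/-- The digraph of known dependencies is acyclic. -/
def Acyclic {n : ℕ} (K : Finset (Fin n × Fin n)) : Prop :=
  ∀ p : Fin n, ¬ Relation.TransGen (fun x y => (x, y) ∈ K) p p

open Classical in
/-- The `K`-closure of `v`: everything reachable from `v` along `K`-edges. -/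
noncomputable def kclosure {n : ℕ} (K : Finset (Fin n × Fin n))
    (v : Finset (Fin n)) : Finset (Fin n) :=
  Finset.univ.filter
    (fun p => ∃ q ∈ v, Relation.ReflTransGen (fun x y => (x, y) ∈ K) q p)

/-- `Sset R T p`: the queries of `T` that are successful installations
containing `p`. -/
def Sset {n : ℕ} (R : Repo n) (T : Finset (Finset (Fin n))) (p : Fin n) :
    Set (Finset (Fin n)) :=
  {t | t ∈ T ∧ Successful R t ∧ p ∈ t}


lemma successful_mk_iff {n : ℕ} (U : Finset (Fin n × Fin n)) (C : Finset (Sym2 (Fin n)))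
    (B : Finset (Fin n)) (hC : ∀ s ∈ C, ¬ s.IsDiag) (I : Finset (Fin n)) :
    Successful (Repo.mk ∅ U C B hC) I ↔
      Disjoint I B ∧ (∀ e ∈ U, e.1 ∈ I → e.2 ∈ I) ∧ (∀ s ∈ C, ¬ ∀ x ∈ s, x ∈ I) := by
  unfold Successful
  simp

lemma pairmem {n : ℕ} (a b : Fin n) (I : Finset (Fin n)) :
    (∀ x ∈ s(a, b), x ∈ I) ↔ a ∈ I ∧ b ∈ I := by
  constructor
  · intro h; exact ⟨h a (by simp), h b (by simp)⟩
  · rintro ⟨ha, hb⟩ x hx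
    rcases Sym2.mem_iff.mp hx with rfl | rfl <;> assumption

/-- Any non-adaptive query family solving Full Learning of weak conflicts with
at most `u` unknown dependencies, at most `d` defects and at most `c`
weakly-conflicting pairs of non-defective packages is an
`(n, d+c-1, u+2)`-cover-free family. -/
theorem full_learning_CFF_lower_bound (n u c d : ℕ) (hc : 1 ≤ c)
    (hn : d + c + u + 1 ≤ n) (T : Finset (Finset (Fin n)))
    (hT : ∀ R₁ R₂ : Repo n,
      R₁.K = ∅ → R₂.K = ∅ →
      R₁.U.card ≤ u → R₂.U.card ≤ u →
      (DefSet R₁).ncard ≤ d → (DefSet R₂).ncard ≤ d →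
      (WeakConflictPairs R₁).ncard ≤ c → (WeakConflictPairs R₂).ncard ≤ c →
      (∀ t ∈ T, Successful R₁ t ↔ Successful R₂ t) →
      (∀ p q : Fin n, WeakConflict R₁ p q ↔ WeakConflict R₂ p q)) :
    IsCFF n (d + c - 1) (u + 2) T := by
  classical
  intro S₁ S₂ hdisj h1 h2
  by_contra hcon
  push_neg at hcon
  obtain ⟨p, hp, q, hq, hpq⟩ := Finset.one_lt_card.mp (by omega : 1 < S₂.card)
  set Sr : Finset (Fin n) := (S₂.erase p).erase q with hSrdef
  have hqep : q ∈ S₂.erase p := Finset.mem_erase.mpr ⟨Ne.symm hpq, hq⟩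
  have hSrcard : Sr.card = u := by
    rw [hSrdef, Finset.card_erase_of_mem hqep, Finset.card_erase_of_mem hp, h2]
    omega
  have hSrsub : Sr ⊆ S₂.erase p := by rw [hSrdef]; exact Finset.erase_subset _ _
  obtain ⟨C', hC'sub, hC'card⟩ := Finset.exists_subset_card_eq (s := S₁) (n := c - 1) (by omega)
  set D : Finset (Fin n) := S₁ \ C' with hDdef
  have hDsub : D ⊆ S₁ := by rw [hDdef]; exact Finset.sdiff_subset
  have hDcard : D.card = d := by
    rw [hDdef, Finset.card_sdiff_of_subset hC'sub, h1, hC'card]; omega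
  have hpS1 : p ∉ S₁ := fun h => (Finset.disjoint_left.mp hdisj h) hp
  have hqS1 : q ∉ S₁ := fun h => (Finset.disjoint_left.mp hdisj h) hq
  have hdisjS2D : Disjoint S₂ D := Finset.disjoint_of_subset_right hDsub hdisj.symm
  set Uf : Finset (Fin n × Fin n) := Sr.image (fun s => (q, s)) with hUfdef
  set C₂ : Finset (Sym2 (Fin n)) := C'.image (fun w => s(w, q)) with hC2def
  set C₁ : Finset (Sym2 (Fin n)) := insert s(p, q) C₂ with hC1def
  have hC₂diag : ∀ s ∈ C₂, ¬ s.IsDiag := by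
    intro s hs
    rw [hC2def, Finset.mem_image] at hs
    obtain ⟨w, hw, rfl⟩ := hs
    rw [Sym2.mk_isDiag_iff]
    intro h; exact hqS1 (h ▸ hC'sub hw)
  have hC₁diag : ∀ s ∈ C₁, ¬ s.IsDiag := by
    intro s hs
    rw [hC1def, Finset.mem_insert] at hs
    rcases hs with rfl | hs
    · rw [Sym2.mk_isDiag_iff]; exact hpq
    · exact hC₂diag s hs
  set R₂ : Repo n := ⟨∅, Uf, C₂, D, hC₂diag⟩ with hR2
  set R₁ : Repo n := ⟨∅, Uf, C₁, D, hC₁diag⟩ with hR1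
  -- characterizations of success
  have succ₂_iff : ∀ I, Successful R₂ I ↔
      (Disjoint I D ∧ (q ∈ I → Sr ⊆ I) ∧ ∀ w ∈ C', ¬(w ∈ I ∧ q ∈ I)) := by
    intro I
    rw [hR2, successful_mk_iff]
    constructor
    · rintro ⟨hA, hB, hCc⟩
      refine ⟨hA, ?_, ?_⟩
      · intro hqI s hs
        exact hB (q, s) (by rw [hUfdef]; exact Finset.mem_image_of_mem _ hs) hqI
      · intro w hw hcon2
        exact hCc s(w, q) (by rw [hC2def]; exact Finset.mem_image_of_mem _ hw)
          ((pairmem w q I).mpr hcon2)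
    · rintro ⟨hA, hB, hCc⟩
      refine ⟨hA, ?_, ?_⟩
      · rintro ⟨e1, e2⟩ he hm
        rw [hUfdef, Finset.mem_image] at he
        obtain ⟨s, hs, heq⟩ := he
        injection heq with h1 h2
        subst h1; subst h2
        exact hB hm hs
      · intro s hs hall
        rw [hC2def, Finset.mem_image] at hs
        obtain ⟨w, hw, rfl⟩ := hs
        exact hCc w hw ((pairmem w q I).mp hall)
  have succ₁_iff : ∀ I, Successful R₁ I ↔ Successful R₂ I ∧ ¬(p ∈ I ∧ q ∈ I) := by
    intro I
    rw [hR1, hR2, successful_mk_iff, successful_mk_iff]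
    constructor
    · rintro ⟨hA, hB, hCc⟩
      refine ⟨⟨hA, hB, fun s hs => hCc s (by rw [hC1def]; exact Finset.mem_insert_of_mem hs)⟩, ?_⟩
      intro hpqI
      exact hCc s(p, q) (by rw [hC1def]; exact Finset.mem_insert_self _ _)
        ((pairmem p q I).mpr hpqI)
    · rintro ⟨⟨hA, hB, hCc⟩, h4⟩
      refine ⟨hA, hB, ?_⟩
      intro s hs
      rw [hC1def, Finset.mem_insert] at hs
      rcases hs with rfl | hs
      · intro hall; exact h4 ((pairmem p q I).mp hall)
      · exact hCc s hs
  have succ₂_gen : ∀ I, Disjoint I D → Sr ⊆ I → (∀ w ∈ C', w ∉ I) → Successful R₂ I := by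
    intro I hA hB hCc
    exact (succ₂_iff I).mpr ⟨hA, fun _ => hB, fun w hw hc => hCc w hw hc.1⟩
  have succ_no_q : ∀ I, Disjoint I D → q ∉ I → Successful R₁ I := by
    intro I hA h2q
    rw [succ₁_iff]
    exact ⟨(succ₂_iff I).mpr ⟨hA, fun h => absurd h h2q, fun w _ hc => h2q hc.2⟩,
      fun hc => h2q hc.2⟩
  -- the two main successful witnesses
  have succSep : Successful R₁ (S₂.erase p) := by
    rw [succ₁_iff]
    refine ⟨succ₂_gen _ ?_ hSrsub ?_, fun hc => Finset.notMem_erase p S₂ hc.1⟩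
    · exact Finset.disjoint_of_subset_left (Finset.erase_subset _ _) hdisjS2D
    · intro w hw hwI
      exact Finset.disjoint_left.mp hdisj (hC'sub hw) (Finset.mem_of_mem_erase hwI)
  have succInsY : ∀ y, y ∉ D → y ∉ C' → Successful R₂ (insert y (S₂.erase p)) := by
    intro y hyD hyC
    refine succ₂_gen _ ?_ (hSrsub.trans (Finset.subset_insert _ _)) ?_
    · rw [Finset.disjoint_insert_left]
      exact ⟨hyD, Finset.disjoint_of_subset_left (Finset.erase_subset _ _) hdisjS2D⟩
    · intro w hw hwI
      rcases Finset.mem_insert.mp hwI with rfl | hwI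
      · exact hyC hw
      · exact Finset.disjoint_left.mp hdisj (hC'sub hw) (Finset.mem_of_mem_erase hwI)
  have succS₂ : Successful R₂ S₂ := by
    have : insert p (S₂.erase p) = S₂ := Finset.insert_erase hp
    have hpD : p ∉ D := fun h => hpS1 (hDsub h)
    have hpC : p ∉ C' := fun h => hpS1 (hC'sub h)
    rw [← this]; exact succInsY p hpD hpC
  -- broken packages are defective
  have broken_def : ∀ (R : Repo n), ∀ x ∈ R.B, Defective R x := by
    intro R x hx I hI hxI
    exact Finset.disjoint_left.mp hI.1 hxI hx
  -- non-defectiveness outside D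
  have not_def : ∀ x, x ∉ D → ¬ Defective R₁ x ∧ ¬ Defective R₂ x := by
    intro x hx
    by_cases hxq : x = q
    · subst hxq
      exact ⟨fun hdef => hdef _ succSep hqep,
        fun hdef => hdef _ ((succ₁_iff _).mp succSep).1 hqep⟩
    · have hs : Successful R₁ {x} := succ_no_q {x} (Finset.disjoint_singleton_left.mpr hx)
        (fun h => hxq (Finset.mem_singleton.mp h).symm)
      exact ⟨fun hdef => hdef _ hs (Finset.mem_singleton_self x),
        fun hdef => hdef _ ((succ₁_iff _).mp hs).1 (Finset.mem_singleton_self x)⟩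
  have defset_bound : ∀ R : Repo n, DefSet R ⊆ ↑D → (DefSet R).ncard ≤ d := by
    intro R h
    calc (DefSet R).ncard ≤ (↑D : Set (Fin n)).ncard :=
          Set.ncard_le_ncard h (D.finite_toSet)
      _ = d := by rw [Set.ncard_coe_finset, hDcard]
  have hdef1 : (DefSet R₁).ncard ≤ d := defset_bound R₁ (fun x hx => by
    by_contra hxD
    exact (not_def x (by simpa using hxD)).1 hx)
  have hdef2 : (DefSet R₂).ncard ≤ d := defset_bound R₂ (fun x hx => by
    by_contra hxD
    exact (not_def x (by simpa using hxD)).2 hx)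
  -- weak-conflict pairs
  set f : Fin n → Fin n × Fin n := fun w => if w < q then (w, q) else (q, w) with hf
  have nondef_notD : ∀ x, ¬ Defective R₂ x → x ∉ D := by
    intro x hnd hxD
    exact hnd (broken_def R₂ x (by rw [hR2]; exact hxD))
  have memab : ∀ a b : Fin n, a ∈ ({a, b} : Finset (Fin n)) ∧ b ∈ ({a, b} : Finset (Fin n)) :=
    fun a b => ⟨Finset.mem_insert_self a {b}, Finset.mem_insert_of_mem (Finset.mem_singleton_self b)⟩
  have succab : ∀ a b : Fin n, a ∉ D → b ∉ D → a ≠ q → b ≠ q →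
      Successful R₁ ({a, b} : Finset (Fin n)) := by
    intro a b haD hbD haq hbq
    refine succ_no_q _ ?_ ?_
    · rw [Finset.disjoint_insert_left, Finset.disjoint_singleton_left]
      exact ⟨haD, hbD⟩
    · intro h; rcases Finset.mem_insert.mp h with h | h
      · exact haq h.symm
      · exact hbq (Finset.mem_singleton.mp h).symm
  have fval : ∀ a b y : Fin n, a < b → (q = a ∧ y = b) ∨ (q = b ∧ y = a) →
      f y = (a, b) := by
    rintro a b y hab (⟨rfl, rfl⟩ | ⟨rfl, rfl⟩)
    · rw [hf]; simp [not_lt_of_gt hab]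
    · rw [hf]; simp [hab]
  have key1 : ∀ a b : Fin n, a < b → a ∉ D → b ∉ D → WeakConflict R₁ a b →
      ∃ y ∈ insert p C', f y = (a, b) := by
    intro a b hab haD hbD hwc
    by_cases haq : a = q
    · -- q = a, y = b
      refine ⟨b, ?_, fval a b b hab (Or.inl ⟨haq.symm, rfl⟩)⟩
      by_contra hbmem
      have hbp : b ≠ p := fun h => hbmem (h ▸ Finset.mem_insert_self p C')
      have hbC : b ∉ C' := fun h => hbmem (Finset.mem_insert_of_mem h)
      have hI : Successful R₁ (insert b (S₂.erase p)) := by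
        rw [succ₁_iff]
        refine ⟨succInsY b hbD hbC, ?_⟩
        rintro ⟨hpI, -⟩
        rcases Finset.mem_insert.mp hpI with h | h
        · exact hbp h.symm
        · exact Finset.notMem_erase p S₂ h
      exact hwc _ hI ⟨haq ▸ Finset.mem_insert_of_mem hqep, Finset.mem_insert_self b _⟩
    · by_cases hbq : b = q
      · -- q = b, y = a
        refine ⟨a, ?_, fval a b a hab (Or.inr ⟨hbq.symm, rfl⟩)⟩
        by_contra hamem
        have hap : a ≠ p := fun h => hamem (h ▸ Finset.mem_insert_self p C')
        have haC : a ∉ C' := fun h => hamem (Finset.mem_insert_of_mem h)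
        have hI : Successful R₁ (insert a (S₂.erase p)) := by
          rw [succ₁_iff]
          refine ⟨succInsY a haD haC, ?_⟩
          rintro ⟨hpI, -⟩
          rcases Finset.mem_insert.mp hpI with h | h
          · exact hap h.symm
          · exact Finset.notMem_erase p S₂ h
        exact hwc _ hI ⟨Finset.mem_insert_self a _, hbq ▸ Finset.mem_insert_of_mem hqep⟩
      · exact absurd (succab a b haD hbD haq hbq)
          (fun hs => hwc _ hs (memab a b))
  have key2 : ∀ a b : Fin n, a < b → a ∉ D → b ∉ D → WeakConflict R₂ a b →
      ∃ y ∈ C', f y = (a, b) := by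
    intro a b hab haD hbD hwc
    by_cases haq : a = q
    · refine ⟨b, ?_, fval a b b hab (Or.inl ⟨haq.symm, rfl⟩)⟩
      by_contra hbC
      exact hwc _ (succInsY b hbD hbC)
        ⟨haq ▸ Finset.mem_insert_of_mem hqep, Finset.mem_insert_self b _⟩
    · by_cases hbq : b = q
      · refine ⟨a, ?_, fval a b a hab (Or.inr ⟨hbq.symm, rfl⟩)⟩
        by_contra haC
        exact hwc _ (succInsY a haD haC)
          ⟨Finset.mem_insert_self a _, hbq ▸ Finset.mem_insert_of_mem hqep⟩
      · exact absurd ((succ₁_iff _).mp (succab a b haD hbD haq hbq)).1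
          (fun hs => hwc _ hs (memab a b))
  -- defectiveness transfer: R₁-successful I is R₂-successful
  have nondef1_notD : ∀ x, ¬ Defective R₁ x → x ∉ D := by
    intro x hnd hxD
    exact hnd (broken_def R₁ x (by rw [hR1]; exact hxD))
  have wcp1 : WeakConflictPairs R₁ ⊆ f '' ↑(insert p C') := by
    rintro ⟨a, b⟩ hab
    obtain ⟨hlt, hnda, hndb, hwc⟩ := hab
    obtain ⟨y, hy, hfy⟩ := key1 a b hlt (nondef1_notD a hnda) (nondef1_notD b hndb) hwc
    exact ⟨y, hy, hfy⟩
  have wcp2 : WeakConflictPairs R₂ ⊆ f '' ↑C' := by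
    rintro ⟨a, b⟩ hab
    obtain ⟨hlt, hnda, hndb, hwc⟩ := hab
    obtain ⟨y, hy, hfy⟩ := key2 a b hlt (nondef_notD a hnda) (nondef_notD b hndb) hwc
    exact ⟨y, hy, hfy⟩
  have hwcp1 : (WeakConflictPairs R₁).ncard ≤ c := by
    calc (WeakConflictPairs R₁).ncard
        ≤ (f '' ↑(insert p C')).ncard :=
          Set.ncard_le_ncard wcp1 (Set.Finite.image _ (Finset.finite_toSet _))
      _ ≤ (↑(insert p C') : Set (Fin n)).ncard := Set.ncard_image_le (Finset.finite_toSet _)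
      _ = (insert p C').card := Set.ncard_coe_finset _
      _ ≤ c := by have := Finset.card_insert_le p C'; omega
  have hwcp2 : (WeakConflictPairs R₂).ncard ≤ c := by
    calc (WeakConflictPairs R₂).ncard
        ≤ (f '' ↑C').ncard :=
          Set.ncard_le_ncard wcp2 (Set.Finite.image _ (Finset.finite_toSet _))
      _ ≤ (↑C' : Set (Fin n)).ncard := Set.ncard_image_le (Finset.finite_toSet _)
      _ = C'.card := Set.ncard_coe_finset _
      _ ≤ c := by omega
  -- identical feedback
  have feedback : ∀ t ∈ T, Successful R₁ t ↔ Successful R₂ t := by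
    intro t ht
    rw [succ₁_iff]
    constructor
    · exact And.left
    · intro h2t
      refine ⟨h2t, ?_⟩
      rintro ⟨hpt, hqt⟩
      obtain ⟨hd, hcl, hcf⟩ := (succ₂_iff t).mp h2t
      have hS2t : S₂ ⊆ t := by
        intro s hs
        by_cases h : s = p
        · exact h ▸ hpt
        by_cases h' : s = q
        · exact h' ▸ hqt
        exact hcl hqt (by
          rw [hSrdef]
          exact Finset.mem_erase.mpr ⟨h', Finset.mem_erase.mpr ⟨h, hs⟩⟩) 
      have hdisjT : Disjoint t S₁ := by
        rw [Finset.disjoint_right]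
        intro x hx
        by_cases hxc : x ∈ C'
        · exact fun hxt => hcf x hxc ⟨hxt, hqt⟩
        · exact Finset.disjoint_right.mp hd (by rw [hDdef]; exact Finset.mem_sdiff.mpr ⟨hx, hxc⟩)
      exact hcon t ht hdisjT hS2t
  have hU1 : R₁.U.card ≤ u := by
    rw [hR1]
    calc Uf.card ≤ Sr.card := by rw [hUfdef]; exact Finset.card_image_le
      _ = u := hSrcard
  have hU2 : R₂.U.card ≤ u := by rw [hR2]; exact hU1
  have hiff := hT R₁ R₂ (by rw [hR1]) (by rw [hR2]) hU1 hU2 hdef1 hdef2 hwcp1 hwcp2 feedback p q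
  have hw1 : WeakConflict R₁ p q := fun I hI => ((succ₁_iff I).mp hI).2
  exact (hiff.mp hw1) S₂ succS₂ ⟨hp, hq⟩
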